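/- Let p be a prime, R a Noetherian ring of characteristic p, (σ, δ) a skew derivation on R with σ∘δ = δ∘σ, and I a two-sided ideal of R with σ(I) ⊆ I. For each m ∈ ℕ let C_m denote the δ^{p^m}-core of I. Then C_m ⊆ C_{m+1} for all m ∈ ℕ, and there exists M ∈ ℕ such that C_m = C_M for all m ≥ M. -/

import Mathlib

/-- Let `R` be Noetherian of characteristic `p`, `(σ, δ)` a skew derivation with
`σδ = δσ`, `I` a two-sided ideal with `σ(I) ⊆ I`, and for each `m` let `C m` be the
`δ^{p^m}`-core of `I` (the largest two-sided ideal `J ⊆ I` with `σ^{p^m}(J) ⊆ J` and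
`δ^{p^m}(J) ⊆ J`).  Then the `C m` are increasing and stabilise. -/
theorem stmt_9 {R : Type*} [Ring R] [IsNoetherianRing R] (p : ℕ) (hp : p.Prime)
    [CharP R p]
    (σ : R →+* R) (hσ : Function.Bijective σ)
    (δ : R → R) (hδadd : ∀ a b : R, δ (a + b) = δ a + δ b)
    (hleib : ∀ a b : R, δ (a * b) = δ a * b + σ a * δ b)
    (hcomm : ∀ a : R, σ (δ a) = δ (σ a))
    (I : TwoSidedIdeal R) (hI : ∀ x ∈ I, σ x ∈ I)
    (C : ℕ → TwoSidedIdeal R)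
    (hCle : ∀ m, C m ≤ I)
    (hCσ : ∀ m, ∀ x ∈ C m, (⇑σ)^[p ^ m] x ∈ C m)
    (hCδ : ∀ m, ∀ x ∈ C m, δ^[p ^ m] x ∈ C m)
    (hCmax : ∀ m, ∀ J : TwoSidedIdeal R, J ≤ I → (∀ x ∈ J, (⇑σ)^[p ^ m] x ∈ J) →
      (∀ x ∈ J, δ^[p ^ m] x ∈ J) → J ≤ C m) :
    (∀ m, C m ≤ C (m + 1)) ∧ ∃ M, ∀ m, M ≤ m → C m = C M := by
  have mono : ∀ m, C m ≤ C (m + 1) := by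
    intro m
    refine hCmax (m + 1) (C m) (hCle m) ?_ ?_
    · intro x hx
      rw [pow_succ, Function.iterate_mul]
      exact Function.Iterate.rec _ hx (fun y hy => hCσ m y hy) p
    · intro x hx
      rw [pow_succ, Function.iterate_mul]
      exact Function.Iterate.rec _ hx (fun y hy => hCδ m y hy) p
  refine ⟨mono, ?_⟩
  have mono' : Monotone fun m => TwoSidedIdeal.asIdeal (C m) :=
    monotone_nat_of_le_succ fun m => TwoSidedIdeal.asIdeal.monotone (mono m)
  obtain ⟨M, hM⟩ := monotone_stabilizes_iff_noetherian.mpr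
    (inferInstance : IsNoetherian R R) ⟨_, mono'⟩
  refine ⟨M, fun m hm => ?_⟩
  have heq : TwoSidedIdeal.asIdeal (C M) = TwoSidedIdeal.asIdeal (C m) := hM m hm
  refine le_antisymm (fun x hx => ?_) (fun x hx => ?_)
  · have : x ∈ TwoSidedIdeal.asIdeal (C M) := by
      rw [heq]; exact TwoSidedIdeal.mem_asIdeal.mpr hx
    exact TwoSidedIdeal.mem_asIdeal.mp this
  · have : x ∈ TwoSidedIdeal.asIdeal (C m) := by
      rw [← heq]; exact TwoSidedIdeal.mem_asIdeal.mpr hx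
    exact TwoSidedIdeal.mem_asIdeal.mp this
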